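/- Let N ≥ 3, α > 2 − N, β ≥ α − 2, and let p satisfy p ≥ 2N/(N−2) and p ≥ 2(N+β)/(N−2+α). Then for every x ∈ ℝ^N with 0 < |x| < 1, writing ρ = 2/(1 − |x|²) and d = log((1 + |x|)/(1 − |x|)), one has −1 + (1/2)(N + (N−2)ρ|x|² + α ρ|x|/d) − (1/p)(N + N ρ|x|² + β ρ|x|/d) ≥ 0. -/

import Mathlib

/-- Auxiliary: on `[0,1)`, `2*t ≤ log(1+t) - log(1-t)`. -/
lemma aux_two_mul_le_log (t : ℝ) (h0 : 0 ≤ t) (h1 : t < 1) :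
    2 * t ≤ Real.log (1 + t) - Real.log (1 - t) := by
  set f : ℝ → ℝ := fun s => Real.log (1 + s) - Real.log (1 - s) - 2 * s with hf
  have hderiv : ∀ s ∈ Set.Ioo (0:ℝ) 1,
      HasDerivAt f (1 / (1 + s) + 1 / (1 - s) - 2) s := by
    intro s hs
    have hs1 : (1 : ℝ) + s ≠ 0 := by nlinarith [hs.1, hs.2]
    have hs2 : (1 : ℝ) - s ≠ 0 := by nlinarith [hs.1, hs.2]
    have d1 : HasDerivAt (fun s : ℝ => Real.log (1 + s)) (1 / (1 + s)) s := by
      have h := (Real.hasDerivAt_log hs1).comp s ((hasDerivAt_const s (1:ℝ)).add (hasDerivAt_id s))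
      exact h.congr_deriv (by ring)
    have d2 : HasDerivAt (fun s : ℝ => Real.log (1 - s)) (-(1 / (1 - s))) s := by
      have h := (Real.hasDerivAt_log hs2).comp s ((hasDerivAt_const s (1:ℝ)).sub (hasDerivAt_id s))
      have : (1 - s)⁻¹ * (0 - 1) = -(1 / (1 - s)) := by ring
      exact h.congr_deriv this
    have d3 : HasDerivAt (fun s : ℝ => 2 * s) 2 s := by
      simpa using (hasDerivAt_id s).const_mul (2:ℝ)
    have := (d1.sub d2).sub d3
    exact this.congr_deriv (by ring)
  have hmono : MonotoneOn f (Set.Ico (0:ℝ) 1) := by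
    apply monotoneOn_of_deriv_nonneg (convex_Ico 0 1)
    · intro s hs
      have hs1 : (0 : ℝ) < 1 + s := by nlinarith [hs.1, hs.2]
      have hs2 : (0 : ℝ) < 1 - s := by nlinarith [hs.1, hs.2]
      exact ((((Real.continuousAt_log hs1.ne').comp (by fun_prop)).sub
        ((Real.continuousAt_log hs2.ne').comp (by fun_prop))).sub
        (continuousAt_const.mul continuousAt_id)).continuousWithinAt
    · intro s hs
      rw [interior_Ico] at hs
      exact (hderiv s hs).differentiableAt.differentiableWithinAt
    · intro s hs
      rw [interior_Ico] at hs
      rw [(hderiv s hs).deriv]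
      have hs1 : (0 : ℝ) < 1 + s := by nlinarith [hs.1, hs.2]
      have hs2 : (0 : ℝ) < 1 - s := by nlinarith [hs.1, hs.2]
      rw [div_add_div _ _ hs1.ne' hs2.ne', sub_nonneg, le_div_iff₀ (by positivity)]
      nlinarith [sq_nonneg s]
  have h0' : (0:ℝ) ∈ Set.Ico (0:ℝ) 1 := by constructor <;> norm_num
  have ht' : t ∈ Set.Ico (0:ℝ) 1 := ⟨h0, h1⟩
  have := hmono h0' ht' h0
  simp only [hf] at this
  norm_num at this
  linarith

/-- nonnegativity of the coefficient in the Pohozaev identity. -/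
theorem pohozaev_coefficient_nonneg (N : ℕ) (hN : 3 ≤ N) (α β p : ℝ)
    (hα : 2 - (N : ℝ) < α) (hβ : α - 2 ≤ β)
    (hp1 : 2 * (N : ℝ) / ((N : ℝ) - 2) ≤ p)
    (hp2 : 2 * ((N : ℝ) + β) / ((N : ℝ) - 2 + α) ≤ p)
    (x : EuclideanSpace ℝ (Fin N)) (hx0 : 0 < ‖x‖) (hx1 : ‖x‖ < 1) (ρ d : ℝ)
    (hρ : ρ = 2 / (1 - ‖x‖ ^ 2))
    (hd : d = Real.log ((1 + ‖x‖) / (1 - ‖x‖))) :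
    0 ≤ -1 + (1 / 2) * ((N : ℝ) + ((N : ℝ) - 2) * ρ * ‖x‖ ^ 2 + α * ρ * ‖x‖ / d)
      - (1 / p) * ((N : ℝ) + (N : ℝ) * ρ * ‖x‖ ^ 2 + β * ρ * ‖x‖ / d) := by
  set t := ‖x‖ with hT
  have ht0 : 0 < t := hx0
  have ht1 : t < 1 := hx1
  have hs : (0:ℝ) < 1 - t ^ 2 := by nlinarith
  have hρpos : 0 < ρ := by rw [hρ]; positivity
  have hNR : (3:ℝ) ≤ (N:ℝ) := by exact_mod_cast hN
  have hN2 : (0:ℝ) < (N:ℝ) - 2 := by linarith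
  have hNα : (0:ℝ) < (N:ℝ) - 2 + α := by linarith
  have hppos : 0 < p := lt_of_lt_of_le (by positivity) hp1
  have h1 : 2 * (N:ℝ) ≤ p * ((N:ℝ) - 2) := by
    rw [div_le_iff₀ hN2] at hp1; linarith
  have h2 : 2 * ((N:ℝ) + β) ≤ p * ((N:ℝ) - 2 + α) := by
    rw [div_le_iff₀ hNα] at hp2; linarith
  have hdgt : 2 * t ≤ d := by
    rw [hd, Real.log_div (by linarith) (by linarith)]
    exact aux_two_mul_le_log t ht0.le ht1
  have hdpos : 0 < d := lt_of_lt_of_le (by linarith) hdgt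
  have hρ2 : ρ * (1 - t ^ 2) = 2 := by rw [hρ]; field_simp
  have hkey : ρ * t ≤ d * (1 + ρ * t ^ 2) := by
    have h2t : ρ * t * (1 - t ^ 2) = 2 * t := by linear_combination t * hρ2
    have h3 : d * (1 + ρ * t ^ 2) * (1 - t ^ 2) = d * (1 + t ^ 2) := by
      linear_combination d * t ^ 2 * hρ2
    have hcmp : ρ * t * (1 - t ^ 2) ≤ d * (1 + ρ * t ^ 2) * (1 - t ^ 2) := by
      rw [h2t, h3]; nlinarith [hdgt, ht0, sq_nonneg t]
    exact (mul_le_mul_iff_of_pos_right hs).mp hcmp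
  have k1 : 0 ≤ p * ((N:ℝ) - 2) - 2 * (N:ℝ) := by linarith
  have k2 : -(p * ((N:ℝ) - 2) - 2 * (N:ℝ)) ≤ p * α - 2 * β := by linarith
  have Hmain : 0 ≤ d * (p * ((N:ℝ) - 2) - 2 * (N:ℝ)) * (1 + ρ * t ^ 2)
      + ρ * t * (p * α - 2 * β) := by
    nlinarith [mul_le_mul_of_nonneg_left hkey k1,
      mul_nonneg (mul_nonneg hρpos.le ht0.le)
        (by linarith : (0:ℝ) ≤ p * α - 2 * β + (p * ((N:ℝ) - 2) - 2 * (N:ℝ)))]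
  have heq : -1 + (1 / 2) * ((N : ℝ) + ((N : ℝ) - 2) * ρ * t ^ 2 + α * ρ * t / d)
      - (1 / p) * ((N : ℝ) + (N : ℝ) * ρ * t ^ 2 + β * ρ * t / d)
      = (d * (p * ((N:ℝ) - 2) - 2 * (N:ℝ)) * (1 + ρ * t ^ 2)
        + ρ * t * (p * α - 2 * β)) / (2 * p * d) := by
    field_simp
    ring
  rw [heq]
  positivity
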